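/- (Numerical form of Proposition 4.1.) Let n ≥ 1 be an integer and D = (d; m_1, ..., m_n) ∈ ℤ^{1+n}. Suppose there exists a real number t with t² > n such that A_t · (2D − K) = 0. Then χ(D) < (n − 1)/8. -/
import Mathlib


/-!
Divisor classes on the blowup of `P^2` at `n` very general points are modeled as
pairs `(d, m) : ℤ × (Fin n → ℤ)` representing `dH - ∑ mᵢ Eᵢ`.
-/

/-- The intersection pairing `D · D' = d d' - ∑ mᵢ mᵢ'`. -/
def pairZ {n : ℕ} (D D' : ℤ × (Fin n → ℤ)) : ℤ :=
  D.1 * D'.1 - ∑ i, D.2 i * D'.2 i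

/-- The canonical class `K = -3H + ∑ Eᵢ`, i.e. `(-3; -1, …, -1)`. -/
def KD (n : ℕ) : ℤ × (Fin n → ℤ) := (-3, fun _ => -1)

/-- The Riemann–Roch Euler characteristic `χ(D) = 1 + (1/2) D·(D - K)`. -/
def chi {n : ℕ} (D : ℤ × (Fin n → ℤ)) : ℚ :=
  1 + (pairZ D (D - KD n) : ℚ) / 2

/-- The real intersection pairing on `ℝ^{1+n}`. -/
def pairR {n : ℕ} (x y : ℝ × (Fin n → ℝ)) : ℝ :=
  x.1 * y.1 - ∑ i, x.2 i * y.2 i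

/-- The real vector associated to an integral divisor class. -/
def toR {n : ℕ} (D : ℤ × (Fin n → ℤ)) : ℝ × (Fin n → ℝ) :=
  ((D.1 : ℝ), fun i => (D.2 i : ℝ))

/-- The (real) class `A_t = tH - E = (t; 1, …, 1)`. -/
def At (n : ℕ) (t : ℝ) : ℝ × (Fin n → ℝ) := (t, fun _ => 1)

/-- Numerical form of Proposition 4.1: if there is `t` with `t² > n` and
`A_t · (2D - K) = 0`, then `χ(D) < (n-1)/8`. -/
theorem chi_lt_of_orthogonal (n : ℕ) (hn : 1 ≤ n) (D : ℤ × (Fin n → ℤ))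
    (h : ∃ t : ℝ, (n : ℝ) < t ^ 2 ∧ pairR (At n t) (toR ((2 : ℤ) • D - KD n)) = 0) :
    chi D < ((n : ℚ) - 1) / 8 := by
  obtain ⟨t, ht, heq⟩ := h
  set f : ℤ := 2 * D.1 + 3 with hf
  set s : Fin n → ℤ := fun i => 2 * D.2 i + 1 with hs
  have heq' : t * (f : ℝ) = ∑ i, (s i : ℝ) := by
    simp only [pairR, At, toR, KD, Prod.fst_sub, Prod.snd_sub, Prod.smul_fst, Prod.smul_snd,
      smul_eq_mul, Pi.sub_apply, Pi.smul_apply, one_mul, sub_eq_zero] at heq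
    simp only [sub_neg_eq_add] at heq
    push_cast at heq ⊢
    rw [hf, hs]
    push_cast
    exact heq
  have hcs : (∑ i, (s i : ℝ)) ^ 2 ≤ (n : ℝ) * ∑ i, (s i : ℝ) ^ 2 := by
    have := sq_sum_le_card_mul_sum_sq (s := (Finset.univ : Finset (Fin n)))
      (f := fun i => (s i : ℝ))
    simpa using this
  have hfpos : (0 : ℝ) < (f : ℝ) ^ 2 := by
    have : f ≠ 0 := by intro h0; omega
    positivity
  have hn' : (0 : ℝ) < n := by positivity
  have key : (f : ℝ) ^ 2 < ∑ i, (s i : ℝ) ^ 2 := by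
    have h2 : t ^ 2 * (f : ℝ) ^ 2 = (t * (f : ℝ)) ^ 2 := by ring
    have h3 : t ^ 2 * (f : ℝ) ^ 2 ≤ (n : ℝ) * ∑ i, (s i : ℝ) ^ 2 := by
      rw [h2, heq']; exact hcs
    have h4 : (n : ℝ) * (f : ℝ) ^ 2 < (n : ℝ) * ∑ i, (s i : ℝ) ^ 2 :=
      lt_of_lt_of_le (mul_lt_mul_of_pos_right ht hfpos) h3
    exact lt_of_mul_lt_mul_left h4 hn'.le
  have keyZ : f ^ 2 - ∑ i, (s i) ^ 2 ≤ -1 := by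
    have hR : ((f ^ 2 - ∑ i, (s i) ^ 2 : ℤ) : ℝ) < 0 := by push_cast; linarith
    have h0 : (f ^ 2 - ∑ i, (s i) ^ 2 : ℤ) < 0 := by exact_mod_cast hR
    omega
  have hsum : ∑ i, (s i) ^ 2 = (∑ i, 4 * (D.2 i * (D.2 i + 1))) + (n : ℤ) := by
    have hterm : ∀ i, s i ^ 2 = 4 * (D.2 i * (D.2 i + 1)) + 1 := fun i => by
      simp only [hs]; ring
    simp only [hterm, Finset.sum_add_distrib, Finset.sum_const, Finset.card_univ,
      Fintype.card_fin, nsmul_eq_mul, smul_eq_mul, mul_one]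
  have hid : 4 * pairZ D (D - KD n) + 9 = f ^ 2 - (∑ i, (s i) ^ 2) + (n : ℤ) := by
    simp only [pairZ, KD, Prod.fst_sub, Prod.snd_sub, Pi.sub_apply, sub_neg_eq_add, hf]
    rw [hsum, ← Finset.mul_sum]
    ring
  have hidQ : 4 * (pairZ D (D - KD n) : ℚ) + 9
      = ((f : ℚ)) ^ 2 - (∑ i, (s i : ℚ) ^ 2) + (n : ℚ) := by exact_mod_cast hid
  have keyQ : ((f : ℚ)) ^ 2 - (∑ i, (s i : ℚ) ^ 2) ≤ -1 := by exact_mod_cast keyZ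
  rw [chi]
  linarith
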